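/- Let V be a finite set, p : V × V → [0,∞) symmetric, c : V → [0,∞), α, γ : V → [0,∞). Let f : ℕ^V → ℝ satisfy |f(η)| ≤ C·R^{∑_i η_i} for some C, R > 0. Define the boundary-driven independent random walkers generator L f(η) = ∑_{i,j ∈ V} p(i,j) [ η_i (f(η − δ_i + δ_j) − f(η)) + η_j (f(η + δ_i − δ_j) − f(η)) ] + ∑_{i ∈ V} c(i) [ α_i (f(η + δ_i) − f(η)) + γ_i η_i (f(η − δ_i) − f(η)) ], and the tensorized Poisson kernel 𝒢f(ζ) = ∑_{η ∈ ℕ^V} f(η) ∏_{i ∈ V} (ζ_i^{η_i} e^{−ζ_i}/η_i!). Then for all ζ ∈ (0,∞)^V, 𝒢(Lf)(ζ) = 𝓛(𝒢f)(ζ), where 𝓛 is the first-order differential operator 𝓛 g(ζ) = − ∑_{i,j ∈ V} p(i,j)(ζ_i − ζ_j)(∂_i − ∂_j) g(ζ) + ∑_{i ∈ V} c(i)(α_i − γ_i ζ_i) ∂_i g(ζ). (The boundary-driven independent random walkers are Poisson-intertwined with a deterministic evolution of the Poisson parameters.) -/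

import Mathlib

open MeasureTheory Real

variable {V : Type*} [Fintype V] [DecidableEq V]

/-- Move one particle from site `i` to site `j`. -/
def moveParticle (η : V → ℕ) (i j : V) : V → ℕ :=
  Function.update (Function.update η i (η i - 1)) j
    (Function.update η i (η i - 1) j + 1)

/-- Add a particle at site `i`. -/
def addParticle (η : V → ℕ) (i : V) : V → ℕ := Function.update η i (η i + 1)

/-- Remove a particle at site `i`. -/
def removeParticle (η : V → ℕ) (i : V) : V → ℕ := Function.update η i (η i - 1)

/-- The boundary-driven independent random walkers generator. -/
noncomputable def irwGen (p : V → V → ℝ) (c α γ : V → ℝ)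
    (f : (V → ℕ) → ℝ) (η : V → ℕ) : ℝ :=
  (∑ i : V, ∑ j : V, p i j *
    ((η i : ℝ) * (f (moveParticle η i j) - f η) +
     (η j : ℝ) * (f (moveParticle η j i) - f η))) +
  ∑ i : V, c i *
    (α i * (f (addParticle η i) - f η) +
     γ i * (η i : ℝ) * (f (removeParticle η i) - f η))

/-- The tensorized Poisson kernel: expectation of `f` under the product of Poisson
distributions with parameters `(ζ_i)_{i∈V}`. -/
noncomputable def poissonKernelV (f : (V → ℕ) → ℝ) (ζ : V → ℝ) : ℝ :=
  ∑' η : V → ℕ, f η * ∏ i : V, ζ i ^ η i * Real.exp (-ζ i) / (η i).factorial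

/-- Partial derivative in the `i`-th coordinate. -/
noncomputable def pderivV (i : V) (g : (V → ℝ) → ℝ) (ζ : V → ℝ) : ℝ :=
  deriv (fun t => g (Function.update ζ i t)) (ζ i)

/-- The deterministic (first-order) intertwined generator of the boundary-driven
independent random walkers. -/
noncomputable def irwFlowGen (p : V → V → ℝ) (c α γ : V → ℝ)
    (g : (V → ℝ) → ℝ) (ζ : V → ℝ) : ℝ :=
  -(∑ i : V, ∑ j : V, p i j * (ζ i - ζ j) * (pderivV i g ζ - pderivV j g ζ)) +
  ∑ i : V, c i * (α i - γ i * ζ i) * pderivV i g ζ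

/-! ### Auxiliary machinery -/

namespace IRWAux

set_option linter.unusedSectionVars false
set_option maxHeartbeats 1000000

/-- The Poisson product weight. -/
noncomputable def pw (ζ : V → ℝ) (η : V → ℕ) : ℝ :=
  ∏ i : V, ζ i ^ η i * Real.exp (-ζ i) / (η i).factorial

lemma prod_update_univ {β : Type*} (F : V → β → ℝ) (ζ : V → β) (i : V) (t : β) :
    ∏ j : V, F j (Function.update ζ i t j) =
      F i t * ∏ j ∈ Finset.univ.erase i, F j (ζ j) := by
  have h : (fun j => F j (Function.update ζ i t j)) =
      Function.update (fun j => F j (ζ j)) i (F i t) := by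
    funext j
    rcases eq_or_ne j i with rfl | hj
    · simp
    · simp [Function.update_of_ne hj]
  rw [h, Finset.prod_update_of_mem (Finset.mem_univ i), Finset.erase_eq]

lemma pw_split (ζ : V → ℝ) (η : V → ℕ) (i : V) :
    pw ζ η = (ζ i ^ η i * Real.exp (-ζ i) / (η i).factorial) *
      ∏ j ∈ Finset.univ.erase i, (ζ j ^ η j * Real.exp (-ζ j) / (η j).factorial) :=
  (Finset.mul_prod_erase Finset.univ _ (Finset.mem_univ i)).symm

lemma pw_nonneg {ζ : V → ℝ} (hζ : ∀ i, 0 ≤ ζ i) (η : V → ℕ) : 0 ≤ pw ζ η :=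
  Finset.prod_nonneg fun j _ =>
    div_nonneg (mul_nonneg (pow_nonneg (hζ j) _) (Real.exp_nonneg _)) (Nat.cast_nonneg _)

lemma addParticle_apply_self (η : V → ℕ) (i : V) : addParticle η i i = η i + 1 := by
  simp [addParticle]

lemma removeParticle_addParticle (η : V → ℕ) (i : V) :
    removeParticle (addParticle η i) i = η := by
  funext j
  rcases eq_or_ne j i with rfl | hj
  · simp [removeParticle, addParticle]
  · simp [removeParticle, addParticle, Function.update_of_ne hj]

lemma addParticle_removeParticle {η : V → ℕ} {i : V} (h : 0 < η i) :
    addParticle (removeParticle η i) i = η := by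
  funext j
  rcases eq_or_ne j i with rfl | hj
  · simp only [removeParticle, addParticle, Function.update_self]
    omega
  · simp [removeParticle, addParticle, Function.update_of_ne hj]

lemma addParticle_injective (i : V) :
    Function.Injective (fun η : V → ℕ => addParticle η i) := by
  intro a b h
  have := congrArg (fun η => removeParticle η i) h
  simpa [removeParticle_addParticle] using this

lemma moveParticle_eq (η : V → ℕ) (i j : V) :
    moveParticle η i j = addParticle (removeParticle η i) j := rfl

lemma pw_addParticle (ζ : V → ℝ) (η : V → ℕ) (i : V) :
    ((η i : ℝ) + 1) * pw ζ (addParticle η i) = ζ i * pw ζ η := by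
  have key : ((η i : ℝ) + 1) * (ζ i ^ (η i + 1) * Real.exp (-ζ i) / ((η i + 1).factorial : ℝ))
      = ζ i * (ζ i ^ η i * Real.exp (-ζ i) / ((η i).factorial : ℝ)) := by
    have h1 : ((η i).factorial : ℝ) ≠ 0 := Nat.cast_ne_zero.mpr (η i).factorial_ne_zero
    have h2 : ((η i : ℝ) + 1) ≠ 0 := by positivity
    rw [Nat.factorial_succ, pow_succ]
    push_cast
    field_simp
  have hpw : pw ζ (addParticle η i)
      = (ζ i ^ (η i + 1) * Real.exp (-ζ i) / ((η i + 1).factorial : ℝ)) *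
        ∏ j ∈ Finset.univ.erase i, (ζ j ^ η j * Real.exp (-ζ j) / (η j).factorial) := by
    unfold pw addParticle
    exact prod_update_univ (fun j m => ζ j ^ m * Real.exp (-ζ j) / (m.factorial : ℝ)) η i (η i + 1)
  rw [hpw, pw_split ζ η i, ← mul_assoc, key, mul_assoc]

lemma tsum_shift (g : (V → ℕ) → ℝ) (ζ : V → ℝ) (i : V) :
    ∑' η : V → ℕ, (η i : ℝ) * g (removeParticle η i) * pw ζ η
      = ζ i * ∑' η : V → ℕ, g η * pw ζ η := by
  have hsupp : Function.support
      (fun η : V → ℕ => (η i : ℝ) * g (removeParticle η i) * pw ζ η)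
        ⊆ Set.range (fun η : V → ℕ => addParticle η i) := by
    intro η hη
    have hpos : 0 < η i := by
      rcases Nat.eq_zero_or_pos (η i) with h0 | hpos
      · exact absurd (by simp [h0]) hη
      · exact hpos
    exact ⟨removeParticle η i, addParticle_removeParticle hpos⟩
  have key := Function.Injective.tsum_eq (addParticle_injective i) hsupp
  rw [← tsum_mul_left, ← key]
  refine tsum_congr fun ξ => ?_
  rw [removeParticle_addParticle, addParticle_apply_self]
  push_cast
  rw [show ((ξ i : ℝ) + 1) * g ξ * pw ζ (addParticle ξ i)
      = g ξ * (((ξ i : ℝ) + 1) * pw ζ (addParticle ξ i)) by ring, pw_addParticle]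
  ring

lemma tsum_count (f : (V → ℕ) → ℝ) (ζ : V → ℝ) (i : V) :
    ∑' η : V → ℕ, (η i : ℝ) * f η * pw ζ η
      = ζ i * ∑' η : V → ℕ, f (addParticle η i) * pw ζ η := by
  rw [← tsum_shift (fun ξ => f (addParticle ξ i)) ζ i]
  refine tsum_congr fun η => ?_
  rcases Nat.eq_zero_or_pos (η i) with h0 | hpos
  · simp [h0]
  · rw [addParticle_removeParticle hpos]

lemma summable_pi_fin : ∀ (n : ℕ) (u : Fin n → ℕ → ℝ), (∀ i k, 0 ≤ u i k) →
    (∀ i, Summable (u i)) → Summable (fun η : Fin n → ℕ => ∏ i, u i (η i)) := by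
  intro n
  induction n with
  | zero =>
    intro u _ _
    have : (fun η : Fin 0 → ℕ => ∏ i, u i (η i)) = fun _ => 1 := by
      funext η; simp
    rw [this]
    exact summable_of_finite_support (Set.toFinite _)
  | succ n ih =>
    intro u h0 hs
    have h := (hs 0).mul_of_nonneg (ih (fun i => u i.succ) (fun i k => h0 _ _) fun i => hs _)
      (fun k => h0 0 k) (fun ξ => Finset.prod_nonneg fun j _ => h0 _ _)
    have hinj : Function.Injective
        (fun η : Fin (n+1) → ℕ => ((η 0, fun i : Fin n => η i.succ) : ℕ × (Fin n → ℕ))) := by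
      intro a b hab
      funext j
      refine Fin.cases ?_ ?_ j
      · exact congrArg Prod.fst hab
      · intro k
        exact congrFun (congrArg Prod.snd hab) k
    exact (h.comp_injective hinj).congr fun η => by
      simp [Function.comp, Fin.prod_univ_succ]

lemma summable_pi_prod (u : V → ℕ → ℝ) (h0 : ∀ i k, 0 ≤ u i k) (hs : ∀ i, Summable (u i)) :
    Summable fun η : V → ℕ => ∏ i, u i (η i) := by
  classical
  obtain ⟨n, ⟨e⟩⟩ : ∃ n, Nonempty (V ≃ Fin n) := ⟨_, ⟨Fintype.equivFin V⟩⟩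
  have h := summable_pi_fin n (fun k => u (e.symm k)) (fun i k => h0 _ _) (fun i => hs _)
  have hinj : Function.Injective (fun η : V → ℕ => fun k : Fin n => η (e.symm k)) := by
    intro a b hab
    funext j
    have := congrFun hab (e j)
    simpa using this
  exact (h.comp_injective hinj).congr fun η => by
    simpa [Function.comp] using Equiv.prod_comp e.symm fun j => u j (η j)

lemma summable_mul_pw (ζ : V → ℝ) (hζ : ∀ i, 0 ≤ ζ i) (g : (V → ℕ) → ℝ) (C R : ℝ)
    (hR : 0 < R) (hg : ∀ η : V → ℕ, |g η| ≤ C * R ^ (∑ i : V, η i)) :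
    Summable fun η : V → ℕ => g η * pw ζ η := by
  have hw0 : ∀ (j : V) (m : ℕ), 0 ≤ (R * ζ j) ^ m * Real.exp (-ζ j) / m.factorial :=
    fun j m => div_nonneg (mul_nonneg (pow_nonneg (mul_nonneg hR.le (hζ j)) _)
      (Real.exp_nonneg _)) (Nat.cast_nonneg _)
  have hwsum : ∀ j : V, Summable fun m : ℕ => (R * ζ j) ^ m * Real.exp (-ζ j) / m.factorial := by
    intro j
    refine ((Real.summable_pow_div_factorial (R * ζ j)).mul_right (Real.exp (-ζ j))).congr
      fun m => by ring
  have hbig := (summable_pi_prod _ hw0 hwsum).mul_left C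
  refine Summable.of_norm_bounded hbig fun η => ?_
  have h1 : ‖g η * pw ζ η‖ = |g η| * pw ζ η := by
    rw [norm_mul, Real.norm_eq_abs, Real.norm_eq_abs, abs_of_nonneg (pw_nonneg hζ η)]
  rw [h1]
  calc |g η| * pw ζ η ≤ (C * R ^ (∑ i : V, η i)) * pw ζ η :=
        mul_le_mul_of_nonneg_right (hg η) (pw_nonneg hζ η)
    _ = C * ∏ j : V, (R * ζ j) ^ η j * Real.exp (-ζ j) / (η j).factorial := by
        rw [mul_assoc]
        congr 1
        rw [← Finset.prod_pow_eq_pow_sum, pw, ← Finset.prod_mul_distrib]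
        exact Finset.prod_congr rfl fun j _ => by rw [mul_pow]; ring

/-- Exponential growth bound predicate. -/
def ExpBd (f : (V → ℕ) → ℝ) : Prop :=
  ∃ C R : ℝ, 0 < R ∧ ∀ η : V → ℕ, |f η| ≤ C * R ^ (∑ i : V, η i)

lemma expBd_c_nonneg {f : (V → ℕ) → ℝ} {C R : ℝ}
    (hb : ∀ η : V → ℕ, |f η| ≤ C * R ^ (∑ i : V, η i)) : 0 ≤ C :=
  le_trans (abs_nonneg _) (by simpa using hb 0)

lemma ExpBd.summable_pw {f : (V → ℕ) → ℝ} (hf : ExpBd f) {ζ : V → ℝ} (hζ : ∀ i, 0 ≤ ζ i) :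
    Summable fun η : V → ℕ => f η * pw ζ η := by
  obtain ⟨C, R, hR, hb⟩ := hf
  exact summable_mul_pw ζ hζ f C R hR hb

lemma sum_addParticle (η : V → ℕ) (i : V) :
    ∑ j : V, addParticle η i j = (∑ j : V, η j) + 1 := by
  unfold addParticle
  rw [Finset.sum_update_of_mem (Finset.mem_univ i)]
  rw [show (Finset.univ : Finset V) \ {i} = Finset.univ.erase i from (Finset.erase_eq _ _).symm]
  rw [← Finset.add_sum_erase Finset.univ η (Finset.mem_univ i)]
  ring

lemma sum_removeParticle_le (η : V → ℕ) (i : V) :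
    ∑ j : V, removeParticle η i j ≤ ∑ j : V, η j := by
  refine Finset.sum_le_sum fun j _ => ?_
  unfold removeParticle
  rcases eq_or_ne j i with rfl | hj
  · simp [Nat.sub_le]
  · simp [Function.update_of_ne hj]

lemma ExpBd.addP {f : (V → ℕ) → ℝ} (hf : ExpBd f) (k : V) :
    ExpBd fun η => f (addParticle η k) := by
  obtain ⟨C, R, hR, hb⟩ := hf
  have hC : 0 ≤ C := expBd_c_nonneg hb
  have hS : 0 < max R 1 := lt_of_lt_of_le one_pos (le_max_right R 1)
  refine ⟨C * max R 1, max R 1, hS, fun η => ?_⟩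
  calc |f (addParticle η k)| ≤ C * R ^ (∑ j : V, addParticle η k j) := hb _
    _ = C * R ^ ((∑ j : V, η j) + 1) := by rw [sum_addParticle]
    _ ≤ C * (max R 1) ^ ((∑ j : V, η j) + 1) := by
        gcongr
        exact le_max_left R 1
    _ = (C * max R 1) * (max R 1) ^ (∑ j : V, η j) := by rw [pow_succ]; ring

lemma ExpBd.removeP {f : (V → ℕ) → ℝ} (hf : ExpBd f) (k : V) :
    ExpBd fun η => f (removeParticle η k) := by
  obtain ⟨C, R, hR, hb⟩ := hf
  have hC : 0 ≤ C := expBd_c_nonneg hb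
  have hS1 : (1 : ℝ) ≤ max R 1 := le_max_right R 1
  refine ⟨C, max R 1, lt_of_lt_of_le one_pos hS1, fun η => ?_⟩
  calc |f (removeParticle η k)| ≤ C * R ^ (∑ j : V, removeParticle η k j) := hb _
    _ ≤ C * (max R 1) ^ (∑ j : V, removeParticle η k j) := by
        gcongr
        exact le_max_left R 1
    _ ≤ C * (max R 1) ^ (∑ j : V, η j) :=
        mul_le_mul_of_nonneg_left (pow_le_pow_right₀ hS1 (sum_removeParticle_le η k)) hC

lemma ExpBd.moveP {f : (V → ℕ) → ℝ} (hf : ExpBd f) (i j : V) :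
    ExpBd fun η => f (moveParticle η i j) :=
  (hf.addP j).removeP i

lemma ExpBd.count {f : (V → ℕ) → ℝ} (hf : ExpBd f) (k : V) :
    ExpBd fun η => (η k : ℝ) * f η := by
  obtain ⟨C, R, hR, hb⟩ := hf
  have hC : 0 ≤ C := expBd_c_nonneg hb
  refine ⟨C, 2 * R, by positivity, fun η => ?_⟩
  have h2 : ((η k : ℝ)) ≤ 2 ^ (∑ j : V, η j) := by
    have hn : η k ≤ 2 ^ (∑ j : V, η j) :=
      le_trans (Nat.lt_two_pow_self).le
        (Nat.pow_le_pow_right (by norm_num)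
          (Finset.single_le_sum (fun _ _ => Nat.zero_le _) (Finset.mem_univ k)))
    exact_mod_cast hn
  calc |(η k : ℝ) * f η| = (η k : ℝ) * |f η| := by
        rw [abs_mul, Nat.abs_cast]
    _ ≤ 2 ^ (∑ j : V, η j) * (C * R ^ (∑ j : V, η j)) :=
        mul_le_mul h2 (hb η) (abs_nonneg _) (by positivity)
    _ = C * (2 * R) ^ (∑ j : V, η j) := by rw [mul_pow]; ring

lemma pderiv_poisson (f : (V → ℕ) → ℝ) (hf : ExpBd f) (ζ : V → ℝ) (hζ : ∀ j, 0 < ζ j) (i : V) :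
    pderivV i (poissonKernelV f) ζ
      = (∑' η : V → ℕ, f (addParticle η i) * pw ζ η) - ∑' η : V → ℕ, f η * pw ζ η := by
  classical
  obtain ⟨C, R, hR, hb⟩ := hf
  have hC : 0 ≤ C := le_trans (abs_nonneg _) (by simpa using hb 0)
  have hζ0 : ∀ j, 0 ≤ ζ j := fun j => (hζ j).le
  set b : ℝ := ζ i + 1 with hbdef
  have hb1 : (1 : ℝ) ≤ b := by have := hζ i; simp only [hbdef]; linarith
  have hb0 : (0 : ℝ) < b := lt_of_lt_of_le one_pos hb1
  set Q : (V → ℕ) → ℝ :=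
    fun η => ∏ j ∈ Finset.univ.erase i, (ζ j ^ η j * Real.exp (-ζ j) / (η j).factorial) with hQ
  have hQ0 : ∀ η, 0 ≤ Q η := fun η => Finset.prod_nonneg fun j _ =>
    div_nonneg (mul_nonneg (pow_nonneg (hζ0 j) _) (Real.exp_nonneg _)) (Nat.cast_nonneg _)
  set g : (V → ℕ) → ℝ → ℝ :=
    fun η t => (t ^ η i * Real.exp (-t) / (η i).factorial) * (f η * Q η) with hg
  set g' : (V → ℕ) → ℝ → ℝ := fun η t =>
    (((η i : ℝ) * t ^ (η i - 1) - t ^ η i) * Real.exp (-t) / (η i).factorial) * (f η * Q η)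
    with hg'
  have hder : ∀ (η : V → ℕ) (t : ℝ), HasDerivAt (fun s => g η s) (g' η t) t := by
    intro η t
    have h1 : HasDerivAt (fun s : ℝ => Real.exp (-s)) (-Real.exp (-t)) t := by
      simpa [Function.comp_def] using ((Real.hasDerivAt_exp (-t)).comp t ((hasDerivAt_id t).neg))
    have h2 : HasDerivAt (fun s : ℝ => s ^ η i) ((η i : ℝ) * t ^ (η i - 1)) t :=
      hasDerivAt_pow _ _
    have h4 := ((h2.mul h1).div_const ((η i).factorial : ℝ)).mul_const (f η * Q η)
    refine h4.congr_deriv ?_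
    simp only [hg']
    ring
  set w : V → ℕ → ℝ := fun j m =>
    if j = i then Real.exp 1 * (((m : ℝ) * b ^ (m - 1) + b ^ m) / m.factorial) * R ^ m
    else (R * ζ j) ^ m * Real.exp (-ζ j) / m.factorial with hw
  have hw0 : ∀ j m, 0 ≤ w j m := by
    intro j m
    simp only [hw]
    split
    · exact mul_nonneg (mul_nonneg (Real.exp_nonneg _)
        (div_nonneg (add_nonneg (mul_nonneg (Nat.cast_nonneg _) (pow_nonneg hb0.le _))
          (pow_nonneg hb0.le _)) (Nat.cast_nonneg _))) (pow_nonneg hR.le _)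
    · exact div_nonneg (mul_nonneg (pow_nonneg (mul_nonneg hR.le (hζ0 _)) _)
        (Real.exp_nonneg _)) (Nat.cast_nonneg _)
  have hwsum : ∀ j, Summable (w j) := by
    intro j
    by_cases hj : j = i
    · have hfun : w j = fun m : ℕ =>
          Real.exp 1 * (((m : ℝ) * b ^ (m - 1) + b ^ m) / m.factorial) * R ^ m := by
        funext m
        simp only [hw]
        rw [if_pos hj]
      rw [hfun]
      have s1 : Summable fun m : ℕ =>
          Real.exp 1 * ((m : ℝ) * b ^ (m - 1) / m.factorial) * R ^ m := by
        rw [← summable_nat_add_iff 1]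
        refine ((Real.summable_pow_div_factorial (b * R)).mul_left
          (Real.exp 1 * R)).congr fun m => ?_
        have hfac : (((m + 1).factorial : ℕ) : ℝ) = ((m : ℝ) + 1) * (m.factorial : ℝ) := by
          rw [Nat.factorial_succ]; push_cast; ring
        have hm : (0:ℝ) < (m.factorial : ℝ) := by exact_mod_cast m.factorial_pos
        have hm1 : ((m : ℝ) + 1) ≠ 0 := by positivity
        simp only [Nat.add_sub_cancel, hfac, pow_succ, mul_pow]
        push_cast
        field_simp
      have s2 : Summable fun m : ℕ => Real.exp 1 * (b ^ m / m.factorial) * R ^ m := by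
        refine ((Real.summable_pow_div_factorial (b * R)).mul_left (Real.exp 1)).congr
          fun m => ?_
        rw [mul_pow]; ring
      refine (s1.add s2).congr fun m => ?_
      ring
    · have hfun : w j = fun m : ℕ => (R * ζ j) ^ m * Real.exp (-ζ j) / m.factorial := by
        funext m
        simp only [hw]
        rw [if_neg hj]
      rw [hfun]
      refine ((Real.summable_pow_div_factorial (R * ζ j)).mul_right
        (Real.exp (-ζ j))).congr fun m => by ring
  set u : (V → ℕ) → ℝ := fun η => C * ∏ j : V, w j (η j) with hu
  have hsum_u : Summable u := (summable_pi_prod w hw0 hwsum).mul_left C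
  have hueq : ∀ η : V → ℕ, u η =
      (((η i : ℝ) * b ^ (η i - 1) + b ^ η i) * Real.exp 1 / (η i).factorial) *
        (C * R ^ (∑ j : V, η j) * Q η) := by
    intro η
    have hsplit : R ^ (∑ j : V, η j) * Q η
        = R ^ η i * ∏ j ∈ Finset.univ.erase i,
            ((R * ζ j) ^ η j * Real.exp (-ζ j) / (η j).factorial) := by
      rw [← Finset.prod_pow_eq_pow_sum,
        ← Finset.mul_prod_erase Finset.univ (fun j => R ^ η j) (Finset.mem_univ i), hQ,
        mul_assoc, ← Finset.prod_mul_distrib]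
      congr 1
      exact Finset.prod_congr rfl fun j _ => by rw [mul_pow]; ring
    have h2 : ∏ j : V, w j (η j)
        = (Real.exp 1 * (((η i : ℝ) * b ^ (η i - 1) + b ^ η i) / (η i).factorial) * R ^ η i) *
          ∏ j ∈ Finset.univ.erase i, ((R * ζ j) ^ η j * Real.exp (-ζ j) / (η j).factorial) := by
      rw [← Finset.mul_prod_erase Finset.univ _ (Finset.mem_univ i)]
      congr 1
      · simp only [hw, if_pos rfl]
      · exact Finset.prod_congr rfl fun j hj => by
          simp only [hw, if_neg (Finset.ne_of_mem_erase hj)]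
    simp only [hu, h2]
    rw [show C * R ^ (∑ j : V, η j) * Q η = C * (R ^ (∑ j : V, η j) * Q η) by ring, hsplit]
    ring
  have hbound : ∀ (η : V → ℕ) (t : ℝ), t ∈ Set.Ioo (-1 : ℝ) b → ‖g' η t‖ ≤ u η := by
    intro η t ht
    have habs_t : |t| ≤ b := abs_le.mpr ⟨by linarith [ht.1, hb1], ht.2.le⟩
    have hexp : Real.exp (-t) ≤ Real.exp 1 := Real.exp_le_exp.mpr (by linarith [ht.1])
    have hfac0 : (0:ℝ) < ((η i).factorial : ℝ) := by exact_mod_cast (η i).factorial_pos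
    have h1 : |(η i : ℝ) * t ^ (η i - 1) - t ^ η i|
        ≤ (η i : ℝ) * b ^ (η i - 1) + b ^ η i := by
      refine (abs_sub _ _).trans ?_
      rw [abs_mul, abs_pow, abs_pow, Nat.abs_cast]
      gcongr <;> first | exact habs_t | exact abs_nonneg t | exact Nat.cast_nonneg _
    have hnorm : ‖g' η t‖ =
        (|(η i : ℝ) * t ^ (η i - 1) - t ^ η i| * Real.exp (-t) / (η i).factorial) *
          (|f η| * Q η) := by
      simp only [hg', Real.norm_eq_abs, abs_mul, abs_div]
      rw [abs_of_pos (Real.exp_pos _), abs_of_pos hfac0, abs_of_nonneg (hQ0 η)]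
    rw [hnorm, hueq η]
    have hstep1 : |(η i : ℝ) * t ^ (η i - 1) - t ^ η i| * Real.exp (-t) / (η i).factorial
        ≤ ((η i : ℝ) * b ^ (η i - 1) + b ^ η i) * Real.exp 1 / (η i).factorial := by
      gcongr
    have hstep2 : |f η| * Q η ≤ C * R ^ (∑ j : V, η j) * Q η :=
      mul_le_mul_of_nonneg_right (hb η) (hQ0 η)
    exact mul_le_mul hstep1 hstep2 (mul_nonneg (abs_nonneg _) (hQ0 η))
      (div_nonneg (mul_nonneg (add_nonneg (mul_nonneg (Nat.cast_nonneg _)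
        (pow_nonneg hb0.le _)) (pow_nonneg hb0.le _)) (Real.exp_nonneg _))
        (Nat.cast_nonneg _))
  have hsum0 : Summable fun η => g η (ζ i) := by
    refine (summable_mul_pw ζ hζ0 f C R hR hb).congr fun η => ?_
    rw [pw_split ζ η i]
    simp only [hg, hQ]
    ring
  have hmem : ζ i ∈ Set.Ioo (-1 : ℝ) b := ⟨by linarith [hζ i], by simp [hbdef]⟩
  have HD : HasDerivAt (fun t => ∑' η, g η t) (∑' η, g' η (ζ i)) (ζ i) :=
    hasDerivAt_tsum_of_isPreconnected hsum_u isOpen_Ioo isPreconnected_Ioo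
      (fun η t _ => hder η t) hbound hmem hsum0 hmem
  have hfun : (fun t => poissonKernelV f (Function.update ζ i t)) = fun t => ∑' η, g η t := by
    funext t
    unfold poissonKernelV
    refine tsum_congr fun η => ?_
    rw [prod_update_univ (fun j x => x ^ η j * Real.exp (-x) / (η j).factorial) ζ i t]
    simp only [hg, hQ]
    ring
  have hderiv : pderivV i (poissonKernelV f) ζ = ∑' η, g' η (ζ i) := by
    rw [pderivV, hfun]
    exact HD.deriv
  rw [hderiv]
  have hζi : ζ i ≠ 0 := (hζ i).ne'
  have hSnum : Summable fun η : V → ℕ => (η i : ℝ) * f η * pw ζ η :=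
    (ExpBd.count ⟨C, R, hR, hb⟩ i).summable_pw hζ0
  have hpt : ∀ η : V → ℕ,
      ((η i : ℝ) * f η * pw ζ η) / ζ i
        = ((η i : ℝ) * ζ i ^ (η i - 1) * Real.exp (-ζ i) / (η i).factorial) * (f η * Q η) := by
    intro η
    rcases Nat.eq_zero_or_pos (η i) with h0 | hpos
    · simp [h0]
    · have hps : ζ i ^ η i = ζ i ^ (η i - 1) * ζ i := by
        rw [← pow_succ]
        congr 1
        omega
      rw [pw_split ζ η i, hps]
      simp only [hQ]
      have hfac0 : ((η i).factorial : ℝ) ≠ 0 := Nat.cast_ne_zero.mpr (η i).factorial_ne_zero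
      field_simp
  have hS1 : Summable fun η : V → ℕ =>
      ((η i : ℝ) * ζ i ^ (η i - 1) * Real.exp (-ζ i) / (η i).factorial) * (f η * Q η) :=
    (hSnum.div_const (ζ i)).congr hpt
  have hS2 : Summable fun η : V → ℕ =>
      (ζ i ^ η i * Real.exp (-ζ i) / (η i).factorial) * (f η * Q η) := hsum0
  have hsplit_deriv : (fun η : V → ℕ => g' η (ζ i)) = fun η =>
      ((η i : ℝ) * ζ i ^ (η i - 1) * Real.exp (-ζ i) / (η i).factorial) * (f η * Q η)
        - (ζ i ^ η i * Real.exp (-ζ i) / (η i).factorial) * (f η * Q η) := by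
    funext η
    simp only [hg']
    ring
  rw [hsplit_deriv, hS1.tsum_sub hS2]
  congr 1
  · have h1 : ∑' η : V → ℕ,
        ((η i : ℝ) * ζ i ^ (η i - 1) * Real.exp (-ζ i) / (η i).factorial) * (f η * Q η)
          = (∑' η : V → ℕ, (η i : ℝ) * f η * pw ζ η) / ζ i := by
      rw [← tsum_div_const]
      exact tsum_congr fun η => (hpt η).symm
    rw [h1, tsum_count f ζ i, mul_comm, mul_div_assoc, div_self hζi, mul_one]
  · exact tsum_congr fun η => by rw [pw_split ζ η i]; ring

end IRWAux

open IRWAux in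
/-- The boundary-driven independent random walkers are Poisson-intertwined with a
deterministic evolution of the Poisson parameters. -/
theorem irw_poisson_intertwining (p : V → V → ℝ) (c α γ : V → ℝ)
    (hp : ∀ i j, 0 ≤ p i j) (hpsymm : ∀ i j, p i j = p j i)
    (hc : ∀ i, 0 ≤ c i) (hα : ∀ i, 0 ≤ α i) (hγ : ∀ i, 0 ≤ γ i)
    (f : (V → ℕ) → ℝ) (C R : ℝ) (hC : 0 < C) (hR : 0 < R)
    (hf : ∀ η : V → ℕ, |f η| ≤ C * R ^ (∑ i : V, η i))
    (ζ : V → ℝ) (hζ : ∀ i, 0 < ζ i) :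
    poissonKernelV (irwGen p c α γ f) ζ = irwFlowGen p c α γ (poissonKernelV f) ζ := by
  classical
  have hζ0 : ∀ i, 0 ≤ ζ i := fun i => (hζ i).le
  have hEf : ExpBd f := ⟨C, R, hR, hf⟩
  set A : V → ℝ := fun k => ∑' η : V → ℕ, f (addParticle η k) * pw ζ η with hA
  set G : ℝ := ∑' η : V → ℕ, f η * pw ζ η with hG
  -- summability facts
  have Sf : Summable fun η : V → ℕ => f η * pw ζ η := hEf.summable_pw hζ0
  have SA : ∀ k, Summable fun η : V → ℕ => f (addParticle η k) * pw ζ η :=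
    fun k => (hEf.addP k).summable_pw hζ0
  have Smv : ∀ i j, Summable fun η : V → ℕ => (η i : ℝ) * f (moveParticle η i j) * pw ζ η :=
    fun i j => ((hEf.moveP i j).count i).summable_pw hζ0
  have Snf : ∀ i, Summable fun η : V → ℕ => (η i : ℝ) * f η * pw ζ η :=
    fun i => (hEf.count i).summable_pw hζ0
  have Srm : ∀ i, Summable fun η : V → ℕ => (η i : ℝ) * f (removeParticle η i) * pw ζ η :=
    fun i => ((hEf.removeP i).count i).summable_pw hζ0
  -- tsum values
  have Tmv : ∀ i j, ∑' η : V → ℕ, (η i : ℝ) * f (moveParticle η i j) * pw ζ η = ζ i * A j :=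
    fun i j => tsum_shift (fun ξ => f (addParticle ξ j)) ζ i
  have Tnf : ∀ i, ∑' η : V → ℕ, (η i : ℝ) * f η * pw ζ η = ζ i * A i :=
    fun i => tsum_count f ζ i
  have Trm : ∀ i, ∑' η : V → ℕ, (η i : ℝ) * f (removeParticle η i) * pw ζ η = ζ i * G :=
    fun i => tsum_shift f ζ i
  -- block decomposition
  set T1 : V → V → (V → ℕ) → ℝ := fun i j η =>
    p i j * ((η i : ℝ) * (f (moveParticle η i j) - f η) +
      (η j : ℝ) * (f (moveParticle η j i) - f η)) * pw ζ η with hT1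
  set T2 : V → (V → ℕ) → ℝ := fun i η =>
    c i * (α i * (f (addParticle η i) - f η) +
      γ i * (η i : ℝ) * (f (removeParticle η i) - f η)) * pw ζ η with hT2
  have ST1 : ∀ i j, Summable (T1 i j) := fun i j =>
    (((((Smv i j).sub (Snf i)).add ((Smv j i).sub (Snf j))).mul_left (p i j)).congr
      fun η => by simp only [hT1]; ring)
  have ST2 : ∀ i, Summable (T2 i) := fun i =>
    ((((SA i).sub Sf).mul_left (c i * α i)).add
      ((((Srm i).sub (Snf i)).mul_left (c i * γ i)))).congr
      fun η => by simp only [hT2]; ring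
  have VT1 : ∀ i j, ∑' η : V → ℕ, T1 i j η
      = p i j * ((ζ i * A j - ζ i * A i) + (ζ j * A i - ζ j * A j)) := by
    intro i j
    have h : ∑' η : V → ℕ, T1 i j η = p i j * ∑' η : V → ℕ,
        ((η i : ℝ) * f (moveParticle η i j) * pw ζ η - (η i : ℝ) * f η * pw ζ η
          + ((η j : ℝ) * f (moveParticle η j i) * pw ζ η - (η j : ℝ) * f η * pw ζ η)) := by
      rw [← tsum_mul_left]
      exact tsum_congr fun η => by simp only [hT1]; ring
    rw [h, Summable.tsum_add ((Smv i j).sub (Snf i)) ((Smv j i).sub (Snf j)),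
      Summable.tsum_sub (Smv i j) (Snf i), Summable.tsum_sub (Smv j i) (Snf j),
      Tmv i j, Tnf i, Tmv j i, Tnf j]
  have VT2 : ∀ i, ∑' η : V → ℕ, T2 i η
      = c i * (α i * (A i - G) + γ i * (ζ i * G - ζ i * A i)) := by
    intro i
    have h : ∑' η : V → ℕ, T2 i η = c i * ∑' η : V → ℕ,
        (α i * (f (addParticle η i) * pw ζ η - f η * pw ζ η)
          + γ i * ((η i : ℝ) * f (removeParticle η i) * pw ζ η
            - (η i : ℝ) * f η * pw ζ η)) := by
      rw [← tsum_mul_left]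
      exact tsum_congr fun η => by simp only [hT2]; ring
    rw [h, Summable.tsum_add (((SA i).sub Sf).mul_left (α i)) (((Srm i).sub (Snf i)).mul_left (γ i)),
      tsum_mul_left, tsum_mul_left, Summable.tsum_sub (SA i) Sf, Summable.tsum_sub (Srm i) (Snf i),
      Trm i, Tnf i]
  -- LHS decomposition
  have hshape : ∀ η : V → ℕ, irwGen p c α γ f η * pw ζ η
      = (∑ i : V, ∑ j : V, T1 i j η) + ∑ i : V, T2 i η := by
    intro η
    simp only [irwGen, hT1, hT2, add_mul, Finset.sum_mul]
  have hs1 : ∀ i ∈ Finset.univ, Summable fun η : V → ℕ => ∑ j : V, T1 i j η :=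
    fun i _ => summable_sum fun j _ => ST1 i j
  have hS1 : Summable fun η : V → ℕ => ∑ i : V, ∑ j : V, T1 i j η := summable_sum hs1
  have hS2 : Summable fun η : V → ℕ => ∑ i : V, T2 i η :=
    summable_sum fun i _ => ST2 i
  have hLHS : poissonKernelV (irwGen p c α γ f) ζ
      = (∑ i : V, ∑ j : V, ∑' η : V → ℕ, T1 i j η) + ∑ i : V, ∑' η : V → ℕ, T2 i η := by
    have h0 : poissonKernelV (irwGen p c α γ f) ζ
        = ∑' η : V → ℕ, ((∑ i : V, ∑ j : V, T1 i j η) + ∑ i : V, T2 i η) :=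
      tsum_congr hshape
    rw [h0, Summable.tsum_add hS1 hS2, Summable.tsum_finsetSum hs1, Summable.tsum_finsetSum fun i _ => ST2 i]
    congr 1
    exact Finset.sum_congr rfl fun i _ => Summable.tsum_finsetSum fun j _ => ST1 i j
  -- RHS
  have hpd : ∀ k, pderivV k (poissonKernelV f) ζ = A k - G := by
    intro k
    rw [hA, hG]
    exact pderiv_poisson f hEf ζ hζ k
  rw [hLHS, irwFlowGen]
  simp only [hpd]
  rw [Finset.sum_congr rfl fun i (_ : i ∈ Finset.univ) =>
    Finset.sum_congr rfl fun j (_ : j ∈ Finset.univ) => VT1 i j,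
    Finset.sum_congr rfl fun i (_ : i ∈ Finset.univ) => VT2 i]
  have hneg : -(∑ i : V, ∑ j : V, p i j * (ζ i - ζ j) * ((A i - G) - (A j - G)))
      = ∑ i : V, ∑ j : V, -(p i j * (ζ i - ζ j) * ((A i - G) - (A j - G))) := by
    simp only [← Finset.sum_neg_distrib]
  rw [hneg]
  congr 1
  · exact Finset.sum_congr rfl fun i _ => Finset.sum_congr rfl fun j _ => by ring
  · exact Finset.sum_congr rfl fun i _ => by ring
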